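/- Let G be an Abelian group, n, k, d non-negative integers with k ≤ n and d ≤ min{k, n−k}. Let R : {0,1}^n → G be a polynomial of degree at most d that does not vanish at some point of Hamming weight exactly k. Then the number of points a ∈ {0,1}^n of Hamming weight k with R(a) ≠ 0 is at least C(n−2d, k−d). -/

import Mathlib

open Finset

/-- Evaluation of a multilinear polynomial with coefficients `c` over an Abelian
group at a point of the Boolean cube. -/
def evalPoly {G : Type*} [AddCommMonoid G] {n : ℕ} (c : Finset (Fin n) → G)
    (x : Fin n → Bool) : G :=
  ∑ S : Finset (Fin n), if ∀ i ∈ S, x i = true then c S else 0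

/-- Hamming weight of a point of the Boolean cube. -/
def hwt {n : ℕ} (x : Fin n → Bool) : ℕ :=
  (Finset.univ.filter (fun i => x i = true)).card

lemma choose_le_of (n k d : ℕ) (hdk : d ≤ k) (hdn : d + k ≤ n) :
    (n - 2*d).choose (k - d) ≤ n.choose k := by
  induction d with
  | zero => simp
  | succ d ih =>
    refine le_trans ?_ (ih (by omega) (by omega))
    obtain ⟨K, hK⟩ : ∃ K, k - d = K + 1 := ⟨k - d - 1, by omega⟩
    obtain ⟨N, hN⟩ : ∃ N, n - 2*d = N + 1 := ⟨n - 2*d - 1, by omega⟩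
    have h2 : k - (d+1) = K := by omega
    rw [hK, hN, h2, Nat.choose_succ_succ]
    calc (n-2*(d+1)).choose K ≤ N.choose K := Nat.choose_le_choose _ (by omega)
      _ ≤ N.choose K + N.choose (K+1) := Nat.le_add_right _ _

lemma sum_ident {G : Type*} [AddCommGroup G] {α : Type*} [DecidableEq α]
    (R : Finset α → G) (i j : α) (Y : Finset α) (hiY : i ∉ Y) (hjY : j ∉ Y) :
    ∑ S ∈ Y.powerset, (if i ∈ S ∨ j ∈ S then 0 else R (insert i S) - R (insert j S))
      = (∑ S ∈ (insert i Y).powerset, R S) - (∑ S ∈ (insert j Y).powerset, R S) := by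
  rw [Finset.sum_powerset_insert hiY, Finset.sum_powerset_insert hjY]
  have h : ∀ S ∈ Y.powerset,
      (if i ∈ S ∨ j ∈ S then (0:G) else R (insert i S) - R (insert j S))
        = R (insert i S) - R (insert j S) := by
    intro S hS
    rw [Finset.mem_powerset] at hS
    rw [if_neg]
    push_neg
    exact ⟨fun h => hiY (hS h), fun h => hjY (hS h)⟩
  rw [Finset.sum_congr rfl h, Finset.sum_sub_distrib]
  abel

lemma key {G : Type*} [AddCommGroup G] [DecidableEq G] {α : Type*} [DecidableEq α]
    (d : ℕ) : ∀ (k : ℕ) (U : Finset α) (R : Finset α → G),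
    (∀ S, d < S.card → R S = 0) → d ≤ k → d + k ≤ U.card →
    (∃ A ∈ U.powersetCard k, (∑ S ∈ A.powerset, R S) ≠ 0) →
    (U.card - 2*d).choose (k - d) ≤
      ((U.powersetCard k).filter (fun A => (∑ S ∈ A.powerset, R S) ≠ 0)).card := by
  induction d with
  | zero =>
    rintro k U R hdeg hdk hdkU ⟨A, hAU, hAne⟩
    have hconst : ∀ B : Finset α, (∑ S ∈ B.powerset, R S) = R ∅ := by
      intro B
      rw [Finset.sum_eq_single_of_mem ∅ (Finset.mem_powerset.2 (Finset.empty_subset _))]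
      intro S _ hSne
      exact hdeg S (Finset.card_pos.2 (Finset.nonempty_iff_ne_empty.2 hSne))
    rw [hconst] at hAne
    rw [Finset.filter_true_of_mem (fun B _ => by rw [hconst]; exact hAne),
      Finset.card_powersetCard]
    simp
  | succ d ih =>
    intro k U R hdeg hdk hdkU hex
    by_cases hcase : ∃ i ∈ U, ∃ j ∈ U, i ≠ j ∧ ∃ Y ∈ (U \ {i,j}).powersetCard (k-1),
        (∑ S ∈ Y.powerset,
          (if i ∈ S ∨ j ∈ S then (0:G) else R (insert i S) - R (insert j S))) ≠ 0
    · obtain ⟨i, hiU, j, hjU, hij, hYex⟩ := hcase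
      set R' : Finset α → G :=
        fun S => if i ∈ S ∨ j ∈ S then (0:G) else R (insert i S) - R (insert j S) with hR'
      have hdeg' : ∀ S, d < S.card → R' S = 0 := by
        intro S hS
        by_cases h : i ∈ S ∨ j ∈ S
        · show (if i ∈ S ∨ j ∈ S then (0:G) else R (insert i S) - R (insert j S)) = 0
          rw [if_pos h]
        · push_neg at h
          show (if i ∈ S ∨ j ∈ S then (0:G) else R (insert i S) - R (insert j S)) = 0
          rw [if_neg (by tauto),
            hdeg _ (by rw [Finset.card_insert_of_notMem h.1]; omega),
            hdeg _ (by rw [Finset.card_insert_of_notMem h.2]; omega), sub_zero]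
      have hijU : ({i, j} : Finset α) ⊆ U := by
        intro x hx
        rcases Finset.mem_insert.1 hx with h | h
        · exact h ▸ hiU
        · exact (Finset.mem_singleton.1 h) ▸ hjU
      have hcard2 : (U \ {i, j}).card = U.card - 2 := by
        rw [Finset.card_sdiff_of_subset hijU, Finset.card_pair hij]
      have hih := ih (k-1) (U \ {i,j}) R' hdeg' (by omega) (by rw [hcard2]; omega)
      rw [hcard2] at hih
      have hih := hih hYex
      have heq1 : U.card - 2 - 2*d = U.card - 2*(d+1) := by omega
      have heq2 : k - 1 - d = k - (d+1) := by omega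
      rw [heq1, heq2] at hih
      refine le_trans hih ?_
      -- injection from the (k-1)-slice witnesses into the k-slice witnesses
      set f : Finset α → G := fun A => ∑ S ∈ A.powerset, R S with hf
      have hmain : ∀ Y ∈ ((U \ {i,j}).powersetCard (k-1)).filter
          (fun Y => (∑ S ∈ Y.powerset, R' S) ≠ 0),
          (i ∉ Y ∧ j ∉ Y ∧ Y ⊆ U ∧ Y.card = k - 1) ∧ (f (insert i Y) ≠ 0 ∨ f (insert j Y) ≠ 0) := by
        intro Y hY
        rw [Finset.mem_filter, Finset.mem_powersetCard] at hY
        obtain ⟨⟨hYsub, hYcard⟩, hYne⟩ := hY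
        have hiY : i ∉ Y := fun h => by
          have := hYsub h; rw [Finset.mem_sdiff] at this; exact this.2 (by simp)
        have hjY : j ∉ Y := fun h => by
          have := hYsub h; rw [Finset.mem_sdiff] at this; exact this.2 (by simp)
        have hident := sum_ident R i j Y hiY hjY
        rw [hident] at hYne
        refine ⟨⟨hiY, hjY, fun x hx => (Finset.mem_sdiff.1 (hYsub hx)).1, hYcard⟩, ?_⟩
        by_contra hcon
        push_neg at hcon
        simp only [hf] at hcon
        rw [hcon.1, hcon.2, sub_zero] at hYne
        exact hYne rfl
      set φ : Finset α → Finset α := fun Y => if f (insert i Y) ≠ 0 then insert i Y else insert j Y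
        with hφ
      apply Finset.card_le_card_of_injOn φ
      · intro Y hY
        obtain ⟨⟨hiY, hjY, hYU, hYcard⟩, hne⟩ := hmain Y hY
        have hk1 : k - 1 + 1 = k := by omega
        rw [Finset.mem_coe, Finset.mem_filter, Finset.mem_powersetCard]
        by_cases hc : f (insert i Y) ≠ 0
        · have hφY : φ Y = insert i Y := if_pos hc
          rw [hφY]
          refine ⟨⟨Finset.insert_subset hiU hYU, ?_⟩, ?_⟩
          · rw [Finset.card_insert_of_notMem hiY, hYcard, hk1]
          · exact hc
        · have hcj : f (insert j Y) ≠ 0 := by tauto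
          have hφY : φ Y = insert j Y := if_neg hc
          rw [hφY]
          refine ⟨⟨Finset.insert_subset hjU hYU, ?_⟩, ?_⟩
          · rw [Finset.card_insert_of_notMem hjY, hYcard, hk1]
          · exact hcj
      · intro Y₁ hY₁ Y₂ hY₂ hφeq
        obtain ⟨⟨hiY₁, hjY₁, _, _⟩, _⟩ := hmain Y₁ hY₁
        obtain ⟨⟨hiY₂, hjY₂, _, _⟩, _⟩ := hmain Y₂ hY₂
        have hY : ∀ (Y : Finset α), i ∉ Y → j ∉ Y → φ Y \ {i, j} = Y := by
          intro Y hiY hjY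
          have h1 : insert i Y \ {i, j} = Y := by
            ext x
            simp only [Finset.mem_sdiff, Finset.mem_insert, Finset.mem_singleton]
            constructor
            · rintro ⟨h1 | h1, h2⟩
              · exact absurd (Or.inl h1) h2
              · exact h1
            · intro hx
              exact ⟨Or.inr hx, by rintro (rfl | rfl) <;> [exact hiY hx; exact hjY hx]⟩
          have h2 : insert j Y \ {i, j} = Y := by
            ext x
            simp only [Finset.mem_sdiff, Finset.mem_insert, Finset.mem_singleton]
            constructor
            · rintro ⟨h1 | h1, h2⟩
              · exact absurd (Or.inr h1) h2
              · exact h1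
            · intro hx
              exact ⟨Or.inr hx, by rintro (rfl | rfl) <;> [exact hiY hx; exact hjY hx]⟩
          by_cases hc : f (insert i Y) ≠ 0
          · simp only [hφ, if_pos hc]; exact h1
          · simp only [hφ, if_neg hc]; exact h2
        rw [← hY Y₁ hiY₁ hjY₁, ← hY Y₂ hiY₂ hjY₂, hφeq]
    · -- Case B: the polynomial is constant on the slice
      push_neg at hcase
      set f : Finset α → G := fun A => ∑ S ∈ A.powerset, R S with hf
      have hswap : ∀ (i j : α), i ∈ U → j ∈ U → i ≠ j → ∀ Y ⊆ U, i ∉ Y → j ∉ Y →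
          Y.card = k - 1 → f (insert i Y) = f (insert j Y) := by
        intro i j hiU hjU hij Y hYU hiY hjY hYcard
        have hY : Y ∈ (U \ {i,j}).powersetCard (k-1) := by
          rw [Finset.mem_powersetCard]
          refine ⟨fun x hx => Finset.mem_sdiff.2 ⟨hYU hx, ?_⟩, hYcard⟩
          simp only [Finset.mem_insert, Finset.mem_singleton]
          rintro (rfl | rfl)
          · exact hiY hx
          · exact hjY hx
        have h0 := hcase i hiU j hjU hij Y hY
        rw [sum_ident R i j Y hiY hjY] at h0
        exact sub_eq_zero.1 h0
      have hconst : ∀ m : ℕ, ∀ A B : Finset α, A ⊆ U → B ⊆ U → A.card = k → B.card = k →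
          (A \ B).card ≤ m → f A = f B := by
        intro m
        induction m with
        | zero =>
          intro A B hAU hBU hAc hBc hAB
          have : A = B := by
            apply Finset.eq_of_subset_of_card_le _ (by omega)
            intro x hx
            by_contra hxB
            have : x ∈ A \ B := Finset.mem_sdiff.2 ⟨hx, hxB⟩
            have := Finset.card_pos.2 ⟨x, this⟩
            omega
          rw [this]
        | succ m ihm =>
          intro A B hAU hBU hAc hBc hAB
          by_cases hABeq : A = B
          · rw [hABeq]
          · have hABne : (A \ B).Nonempty := by
              rw [Finset.sdiff_nonempty]
              intro hsub
              exact hABeq (Finset.eq_of_subset_of_card_le hsub (by omega))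
            obtain ⟨i, hiAB⟩ := hABne
            rw [Finset.mem_sdiff] at hiAB
            have hBAne : (B \ A).Nonempty := by
              rw [← Finset.card_pos, Finset.card_sdiff_comm (by omega), Finset.card_pos]
              rw [Finset.sdiff_nonempty]
              intro hsub
              exact hABeq (Finset.eq_of_subset_of_card_le hsub (by omega))
            obtain ⟨j, hjBA⟩ := hBAne
            rw [Finset.mem_sdiff] at hjBA
            have hk1 : 1 ≤ k := by omega
            set Y : Finset α := A.erase i with hYdef
            have hiY : i ∉ Y := Finset.notMem_erase _ _
            have hjY : j ∉ Y := fun h => hjBA.2 (Finset.erase_subset _ _ h)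
            have hYU : Y ⊆ U := (Finset.erase_subset _ _).trans hAU
            have hYcard : Y.card = k - 1 := by
              rw [hYdef, Finset.card_erase_of_mem hiAB.1, hAc]
            have hij : i ≠ j := fun h => hjBA.2 (h ▸ hiAB.1)
            have hstep : f A = f (insert j Y) := by
              rw [← Finset.insert_erase hiAB.1]
              exact hswap i j (hAU hiAB.1) (hBU hjBA.1) hij Y hYU hiY hjY hYcard
            rw [hstep]
            apply ihm (insert j Y) B
            · exact Finset.insert_subset (hBU hjBA.1) hYU
            · exact hBU
            · rw [Finset.card_insert_of_notMem hjY, hYcard]; omega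
            · exact hBc
            · have hset : insert j Y \ B = (A \ B).erase i := by
                ext x
                simp only [Finset.mem_sdiff, Finset.mem_insert, Finset.mem_erase, hYdef]
                constructor
                · rintro ⟨rfl | ⟨hxi, hxA⟩, hxB⟩
                  · exact absurd hjBA.1 hxB
                  · exact ⟨hxi, hxA, hxB⟩
                · rintro ⟨hxi, hxA, hxB⟩
                  exact ⟨Or.inr ⟨hxi, hxA⟩, hxB⟩
              rw [hset, Finset.card_erase_of_mem (Finset.mem_sdiff.2 hiAB)]
              omega
      obtain ⟨A₀, hA₀U, hA₀ne⟩ := hex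
      rw [Finset.mem_powersetCard] at hA₀U
      have hall : ∀ B ∈ U.powersetCard k, f B ≠ 0 := by
        intro B hB
        rw [Finset.mem_powersetCard] at hB
        rw [hconst (B \ A₀).card B A₀ hB.1 hA₀U.1 hB.2 hA₀U.2 le_rfl]
        exact hA₀ne
      rw [Finset.filter_true_of_mem hall, Finset.card_powersetCard]
      exact choose_le_of U.card k (d+1) hdk hdkU

lemma evalPoly_eq {G : Type*} [AddCommMonoid G] {n : ℕ} (c : Finset (Fin n) → G)
    (x : Fin n → Bool) :
    evalPoly c x = ∑ S ∈ (Finset.univ.filter (fun i => x i = true)).powerset, c S := by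
  rw [evalPoly, ← Finset.sum_filter]
  apply Finset.sum_congr _ (fun _ _ => rfl)
  ext S
  simp [Finset.mem_powerset, Finset.subset_iff]

/-- DLSZ lemma over Hamming slices: if a degree-`d` polynomial over an Abelian group
does not vanish at some point of Hamming weight `k`, then it is non-zero at at least
`C(n-2d, k-d)` points of the weight-`k` slice. -/
theorem stmt2 {G : Type*} [AddCommGroup G] [DecidableEq G] (n k d : ℕ)
    (hk : k ≤ n) (hdk : d ≤ k) (hdnk : d + k ≤ n)
    (R : Finset (Fin n) → G) (hdeg : ∀ S : Finset (Fin n), d < S.card → R S = 0)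
    (hnz : ∃ a : Fin n → Bool, hwt a = k ∧ evalPoly R a ≠ 0) :
    (n - 2*d).choose (k - d) ≤
      (Finset.univ.filter (fun a : Fin n → Bool => hwt a = k ∧ evalPoly R a ≠ 0)).card := by
  classical
  obtain ⟨a₀, ha₀w, ha₀nz⟩ := hnz
  have hcardU : (Finset.univ : Finset (Fin n)).card = n := by simp
  have hex : ∃ A ∈ (Finset.univ : Finset (Fin n)).powersetCard k,
      (∑ S ∈ A.powerset, R S) ≠ 0 := by
    refine ⟨Finset.univ.filter (fun i => a₀ i = true), ?_, ?_⟩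
    · rw [Finset.mem_powersetCard]
      exact ⟨Finset.filter_subset _ _, ha₀w⟩
    · rw [← evalPoly_eq]; exact ha₀nz
  have hkey := key d k (Finset.univ : Finset (Fin n)) R hdeg hdk (by rw [hcardU]; exact hdnk) hex
  rw [hcardU] at hkey
  refine le_trans hkey ?_
  apply Finset.card_le_card_of_injOn (fun A => fun i => decide (i ∈ A))
  · intro A hA
    rw [Finset.mem_coe, Finset.mem_filter, Finset.mem_powersetCard] at hA
    have hAA : (Finset.univ.filter (fun i => decide (i ∈ A) = true)) = A := by
      ext x; simp
    rw [Finset.mem_coe, Finset.mem_filter]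
    refine ⟨Finset.mem_univ _, ?_, ?_⟩
    · rw [hwt, hAA]; exact hA.1.2
    · rw [evalPoly_eq, hAA]; exact hA.2
  · intro A₁ _ A₂ _ heq
    ext x
    have := congrFun heq x
    simpa using this
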